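/- Let λ > 0, z > 0 and x ≥ z. Then 1 − λ·∫_0^∞ exp(−2x(x−z)/r)·p(r, z, λr) dr = 1 − exp(−2λ(x−z)), i.e. λ·∫_0^∞ exp(−2x(x−z)/r)·p(r,z,λr) dr = exp(−2λ(x−z)). -/

import Mathlib

open MeasureTheory Real

/-- Gaussian density with variance `t` and mean `m`, evaluated at `x`. -/
noncomputable def gaussDensity (t x m : ℝ) : ℝ :=
  Real.exp (-(x - m) ^ 2 / (2 * t)) / Real.sqrt (2 * Real.pi * t)

open Set




section Aux
variable (lam y : ℝ)

noncomputable def fsub (lam y : ℝ) : ℝ → ℝ := fun r => lam * Real.sqrt r - y / Real.sqrt r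

noncomputable def fsub' (lam y : ℝ) : ℝ → ℝ :=
  fun r => lam / (2 * Real.sqrt r) + y / (2 * r * Real.sqrt r)

lemma fsub_hasDeriv (hlam : 0 < lam) (hy : 0 < y) {r : ℝ} (hr : 0 < r) :
    HasDerivAt (fsub lam y) (fsub' lam y r) r := by
  have hs : Real.sqrt r ≠ 0 := by positivity
  have h1 := Real.hasDerivAt_sqrt hr.ne'
  have h2 := ((h1.const_mul lam).sub (((h1.inv hs).const_mul y)))
  refine (show HasDerivAt (fsub lam y) _ r from h2).congr_deriv ?_
  have hsq : Real.sqrt r ^ 2 = r := Real.sq_sqrt hr.le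
  unfold fsub'
  field_simp
  nlinarith [hsq, Real.sqrt_pos.mpr hr]

lemma fsub_strictMono (hlam : 0 < lam) (hy : 0 < y) : StrictMonoOn (fsub lam y) (Ioi 0) := by
  intro a ha b hb hab
  have ha' : (0:ℝ) < Real.sqrt a := Real.sqrt_pos.mpr ha
  have hb' : (0:ℝ) < Real.sqrt b := Real.sqrt_pos.mpr hb
  have h : Real.sqrt a < Real.sqrt b := Real.sqrt_lt_sqrt (le_of_lt ha) hab
  have h1 : lam * Real.sqrt a < lam * Real.sqrt b := by nlinarith
  have h2 : y / Real.sqrt b < y / Real.sqrt a := by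
    apply div_lt_div_of_pos_left hy ha' h
  simp only [fsub]
  linarith

lemma fsub_image (hlam : 0 < lam) (hy : 0 < y) : fsub lam y '' Ioi 0 = univ := by
  apply eq_univ_of_forall
  intro u
  set s := Real.sqrt (u ^ 2 + 4 * lam * y) with hs
  have hs2 : s ^ 2 = u ^ 2 + 4 * lam * y := Real.sq_sqrt (by positivity)
  have hsu : -u < s := by
    rcases le_or_gt u 0 with h | h
    · have : (-u) ^ 2 < s ^ 2 := by nlinarith
      nlinarith [Real.sqrt_nonneg (u ^ 2 + 4 * lam * y)]
    · have := Real.sqrt_nonneg (u ^ 2 + 4 * lam * y)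
      linarith
  set t := (u + s) / (2 * lam) with ht
  have ht0 : 0 < t := by
    apply div_pos (by linarith) (by linarith)
  refine ⟨t ^ 2, mem_Ioi.mpr (by positivity), ?_⟩
  have hsq : Real.sqrt (t ^ 2) = t := Real.sqrt_sq ht0.le
  simp only [fsub, hsq]
  have : lam * t ^ 2 - u * t - y = 0 := by
    have : (u + s) ^ 2 = 2 * u * (u + s) + 4 * lam * y := by nlinarith
    rw [ht]
    field_simp
    nlinarith
  field_simp
  nlinarith
end Aux
noncomputable def gE (lam y : ℝ) : ℝ → ℝ := fun r => Real.exp (-(y - lam * r) ^ 2 / (2 * r))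

lemma gauss_exp_eq : (fun x : ℝ => Real.exp (-(1/2) * x ^ 2)) = fun x : ℝ => Real.exp (-x ^ 2 / 2) := by
  funext x; ring_nf

lemma gauss_int : (∫ x : ℝ, Real.exp (-x ^ 2 / 2)) = Real.sqrt (2 * Real.pi) := by
  have h := integral_gaussian (1/2 : ℝ)
  rw [show Real.pi / (1/2) = 2 * Real.pi by ring] at h
  rw [← gauss_exp_eq, h]

lemma gauss_integrable : Integrable (fun x : ℝ => Real.exp (-x ^ 2 / 2)) := by
  rw [← gauss_exp_eq]; exact integrable_exp_neg_mul_sq (by norm_num)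

lemma fsub_sq_eq (lam y : ℝ) {r : ℝ} (hr : 0 < r) :
    Real.exp (-(fsub lam y r) ^ 2 / 2) = gE lam y r := by
  have hs : Real.sqrt r ≠ 0 := by positivity
  have hsq : Real.sqrt r ^ 2 = r := Real.sq_sqrt hr.le
  congr 1
  simp only [fsub, gE]
  have h : Real.sqrt r * Real.sqrt r = r := Real.mul_self_sqrt hr.le
  field_simp
  rw [hsq]
  ring

lemma step1 (lam y : ℝ) (hlam : 0 < lam) (hy : 0 < y) :
    ∫ r in Ioi (0:ℝ), |fsub' lam y r| * Real.exp (-(fsub lam y r) ^ 2 / 2)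
      = Real.sqrt (2 * Real.pi) := by
  have h := integral_image_eq_integral_abs_deriv_smul measurableSet_Ioi
    (fun r hr => ((fsub_hasDeriv lam y hlam hy (mem_Ioi.mp hr)).hasDerivWithinAt))
    ((fsub_strictMono lam y hlam hy).injOn) (fun u => Real.exp (-u ^ 2 / 2))
  rw [fsub_image lam y hlam hy] at h
  simp only [smul_eq_mul, Measure.restrict_univ] at h
  rw [← h, gauss_int]

lemma step1_integrable (lam y : ℝ) (hlam : 0 < lam) (hy : 0 < y) :
    IntegrableOn (fun r => |fsub' lam y r| * Real.exp (-(fsub lam y r) ^ 2 / 2)) (Ioi (0:ℝ)) := by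
  have h := (integrableOn_image_iff_integrableOn_abs_deriv_smul measurableSet_Ioi
    (fun r hr => ((fsub_hasDeriv lam y hlam hy (mem_Ioi.mp hr)).hasDerivWithinAt))
    ((fsub_strictMono lam y hlam hy).injOn) (fun u => Real.exp (-u ^ 2 / 2))).mp
  rw [fsub_image lam y hlam hy] at h
  simpa only [smul_eq_mul] using h ((gauss_integrable).integrableOn)
lemma swap_int (lam y : ℝ) (hlam : 0 < lam) (hy : 0 < y) :
    ∫ r in Ioi (0:ℝ), y / (2 * r * Real.sqrt r) * gE lam y r
      = ∫ r in Ioi (0:ℝ), lam / (2 * Real.sqrt r) * gE lam y r := by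
  set c := (y / lam) ^ 2 with hc
  have hc0 : 0 < c := by positivity
  have hderiv : ∀ r ∈ Ioi (0:ℝ),
      HasDerivWithinAt (fun r : ℝ => c / r) (-(c / r ^ 2)) (Ioi 0) r := by
    intro r hr
    have hr0 : r ≠ 0 := (mem_Ioi.mp hr).ne'
    have h := (hasDerivAt_inv hr0).const_mul c
    have h2 : HasDerivAt (fun r : ℝ => c / r) (-(c / r ^ 2)) r := by
      have heq : (fun u : ℝ => c / u) = fun u : ℝ => c * u⁻¹ := funext fun u => div_eq_mul_inv c u
      rw [heq, show -(c / r ^ 2) = c * -(r ^ 2)⁻¹ by ring]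
      exact h
    exact h2.hasDerivWithinAt
  have hinj : InjOn (fun r : ℝ => c / r) (Ioi 0) := by
    intro a ha b hb h
    have ha' : a ≠ 0 := (mem_Ioi.mp ha).ne'
    have hb' : b ≠ 0 := (mem_Ioi.mp hb).ne'
    dsimp at h
    field_simp at h
    exact h.symm
  have himg : (fun r : ℝ => c / r) '' Ioi 0 = Ioi 0 := by
    ext u
    simp only [mem_image, mem_Ioi]
    constructor
    · rintro ⟨r, hr, rfl⟩; positivity
    · intro hu; exact ⟨c / u, by positivity, by field_simp⟩
  have h := integral_image_eq_integral_abs_deriv_smul measurableSet_Ioi hderiv hinj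
    (fun u => y / (2 * u * Real.sqrt u) * gE lam y u)
  rw [himg] at h
  rw [h]
  apply setIntegral_congr_fun measurableSet_Ioi
  intro r hr
  have hr0 : (0:ℝ) < r := mem_Ioi.mp hr
  have hs : (0:ℝ) < Real.sqrt r := Real.sqrt_pos.mpr hr0
  have hcr : (0:ℝ) < c / r := by positivity
  have hsc : Real.sqrt c = y / lam := by
    rw [hc, Real.sqrt_sq (by positivity)]
  have hscr : Real.sqrt (c / r) = (y / lam) / Real.sqrt r := by
    rw [Real.sqrt_div hc0.le, hsc]
  have hgE : gE lam y (c / r) = gE lam y r := by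
    simp only [gE]
    congr 1
    rw [hc]
    field_simp
    ring
  simp only [smul_eq_mul, hgE]
  rw [abs_neg, abs_of_pos (by positivity : (0:ℝ) < c / r ^ 2), hscr]
  have hss : Real.sqrt r * Real.sqrt r = r := Real.mul_self_sqrt hr0.le
  rw [hc]
  field_simp
  ring_nf
  rw [Real.sq_sqrt hr0.le]
  ring
lemma gE_contOn (lam y : ℝ) : ContinuousOn (gE lam y) (Ioi 0) := by
  apply Real.continuous_exp.comp_continuousOn
  exact ContinuousOn.div (by fun_prop) (by fun_prop)
    (fun r hr => by have : (0:ℝ) < r := hr; positivity)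

lemma A_contOn (lam y : ℝ) :
    ContinuousOn (fun r => lam / (2 * Real.sqrt r) * gE lam y r) (Ioi 0) := by
  apply ContinuousOn.mul _ (gE_contOn lam y)
  exact ContinuousOn.div (by fun_prop) (by fun_prop)
    (fun r hr => by have : (0:ℝ) < r := hr; positivity)

lemma B_contOn (lam y : ℝ) :
    ContinuousOn (fun r => y / (2 * r * Real.sqrt r) * gE lam y r) (Ioi 0) := by
  apply ContinuousOn.mul _ (gE_contOn lam y)
  exact ContinuousOn.div (by fun_prop) (by fun_prop)
    (fun r hr => by have : (0:ℝ) < r := hr; positivity)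

lemma F_eq (lam y : ℝ) (hlam : 0 < lam) (hy : 0 < y) :
    ∀ r ∈ Ioi (0:ℝ), |fsub' lam y r| * Real.exp (-(fsub lam y r) ^ 2 / 2)
      = lam / (2 * Real.sqrt r) * gE lam y r + y / (2 * r * Real.sqrt r) * gE lam y r := by
  intro r hr
  have hr0 : (0:ℝ) < r := hr
  rw [fsub_sq_eq lam y hr0]
  have habs : |fsub' lam y r| = fsub' lam y r := by
    apply abs_of_pos
    have hs : (0:ℝ) < Real.sqrt r := Real.sqrt_pos.mpr hr0
    simp only [fsub']
    positivity
  rw [habs, fsub']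
  ring

lemma F_integrableOn (lam y : ℝ) (hlam : 0 < lam) (hy : 0 < y) :
    IntegrableOn (fun r => lam / (2 * Real.sqrt r) * gE lam y r
      + y / (2 * r * Real.sqrt r) * gE lam y r) (Ioi (0:ℝ)) := by
  apply (step1_integrable lam y hlam hy).congr_fun (F_eq lam y hlam hy) measurableSet_Ioi

lemma A_integrableOn (lam y : ℝ) (hlam : 0 < lam) (hy : 0 < y) :
    IntegrableOn (fun r => lam / (2 * Real.sqrt r) * gE lam y r) (Ioi (0:ℝ)) := by
  apply Integrable.mono (F_integrableOn lam y hlam hy)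
    ((A_contOn lam y).aestronglyMeasurable measurableSet_Ioi)
  rw [ae_restrict_iff' measurableSet_Ioi]
  filter_upwards with r hr
  have hr0 : (0:ℝ) < r := hr
  have hs : (0:ℝ) < Real.sqrt r := Real.sqrt_pos.mpr hr0
  have h1 : (0:ℝ) ≤ lam / (2 * Real.sqrt r) * gE lam y r := by
    have := Real.exp_nonneg (-(y - lam * r) ^ 2 / (2 * r)); simp only [gE]; positivity
  have h2 : (0:ℝ) ≤ y / (2 * r * Real.sqrt r) * gE lam y r := by
    have := Real.exp_nonneg (-(y - lam * r) ^ 2 / (2 * r)); simp only [gE]; positivity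
  rw [Real.norm_eq_abs, Real.norm_eq_abs, abs_of_nonneg h1, abs_of_nonneg (add_nonneg h1 h2)]
  linarith

lemma B_integrableOn (lam y : ℝ) (hlam : 0 < lam) (hy : 0 < y) :
    IntegrableOn (fun r => y / (2 * r * Real.sqrt r) * gE lam y r) (Ioi (0:ℝ)) := by
  apply Integrable.mono (F_integrableOn lam y hlam hy)
    ((B_contOn lam y).aestronglyMeasurable measurableSet_Ioi)
  rw [ae_restrict_iff' measurableSet_Ioi]
  filter_upwards with r hr
  have hr0 : (0:ℝ) < r := hr
  have hs : (0:ℝ) < Real.sqrt r := Real.sqrt_pos.mpr hr0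
  have h1 : (0:ℝ) ≤ lam / (2 * Real.sqrt r) * gE lam y r := by
    have := Real.exp_nonneg (-(y - lam * r) ^ 2 / (2 * r)); simp only [gE]; positivity
  have h2 : (0:ℝ) ≤ y / (2 * r * Real.sqrt r) * gE lam y r := by
    have := Real.exp_nonneg (-(y - lam * r) ^ 2 / (2 * r)); simp only [gE]; positivity
  rw [Real.norm_eq_abs, Real.norm_eq_abs, abs_of_nonneg h2, abs_of_nonneg (add_nonneg h1 h2)]
  linarith

lemma key_int (lam y : ℝ) (hlam : 0 < lam) (hy : 0 < y) :
    ∫ r in Ioi (0:ℝ), lam / Real.sqrt r * gE lam y r = Real.sqrt (2 * Real.pi) := by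
  have hsplit : ∫ r in Ioi (0:ℝ), (lam / (2 * Real.sqrt r) * gE lam y r
        + y / (2 * r * Real.sqrt r) * gE lam y r)
      = (∫ r in Ioi (0:ℝ), lam / (2 * Real.sqrt r) * gE lam y r)
        + ∫ r in Ioi (0:ℝ), y / (2 * r * Real.sqrt r) * gE lam y r :=
    integral_add (A_integrableOn lam y hlam hy) (B_integrableOn lam y hlam hy)
  have hF : ∫ r in Ioi (0:ℝ), (lam / (2 * Real.sqrt r) * gE lam y r
        + y / (2 * r * Real.sqrt r) * gE lam y r) = Real.sqrt (2 * Real.pi) := by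
    rw [← step1 lam y hlam hy]
    exact (setIntegral_congr_fun measurableSet_Ioi (F_eq lam y hlam hy)).symm
  have h2 : (2:ℝ) * ∫ r in Ioi (0:ℝ), lam / (2 * Real.sqrt r) * gE lam y r
      = Real.sqrt (2 * Real.pi) := by
    rw [two_mul, ← hF, hsplit, swap_int lam y hlam hy]
  rw [← h2, ← integral_const_mul]
  apply setIntegral_congr_fun measurableSet_Ioi
  intro r hr
  have hs : Real.sqrt r ≠ 0 := (Real.sqrt_pos.mpr hr).ne'
  field_simp
lemma gauss_total (lam y : ℝ) (hlam : 0 < lam) (hy : 0 < y) :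
    lam * ∫ r in Ioi (0:ℝ), gaussDensity r y (lam * r) = 1 := by
  have hpi : (0:ℝ) < Real.sqrt (2 * Real.pi) := Real.sqrt_pos.mpr (by positivity)
  have h : ∫ r in Ioi (0:ℝ), lam * gaussDensity r y (lam * r)
      = (Real.sqrt (2 * Real.pi))⁻¹ * ∫ r in Ioi (0:ℝ), lam / Real.sqrt r * gE lam y r := by
    rw [← integral_const_mul]
    apply setIntegral_congr_fun measurableSet_Ioi
    intro r hr
    have hr0 : (0:ℝ) < r := hr
    have hs : (0:ℝ) < Real.sqrt r := Real.sqrt_pos.mpr hr0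
    simp only [gaussDensity, gE]
    rw [Real.sqrt_mul (by positivity : (0:ℝ) ≤ 2 * Real.pi) r]
    field_simp
  rw [← integral_const_mul, h, key_int lam y hlam hy, inv_mul_cancel₀ hpi.ne']
theorem stmt_5 (lam z x : ℝ) (hlam : 0 < lam) (hz : 0 < z) (hx : z ≤ x) :
    lam * ∫ r in Set.Ioi (0 : ℝ),
        Real.exp (-(2 * x * (x - z)) / r) * gaussDensity r z (lam * r) =
      Real.exp (-(2 * lam * (x - z))) := by
  have hy : (0:ℝ) < 2 * x - z := by linarith
  have hpt : ∀ r ∈ Ioi (0:ℝ),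
      Real.exp (-(2 * x * (x - z)) / r) * gaussDensity r z (lam * r)
        = Real.exp (-(2 * lam * (x - z))) * gaussDensity r (2 * x - z) (lam * r) := by
    intro r hr
    have hr0 : (0:ℝ) < r := hr
    simp only [gaussDensity]
    rw [← mul_div_assoc, ← mul_div_assoc, ← Real.exp_add, ← Real.exp_add]
    congr 1
    field_simp
    ring
  rw [setIntegral_congr_fun measurableSet_Ioi hpt, integral_const_mul,
    show lam * (Real.exp (-(2 * lam * (x - z))) * ∫ r in Ioi (0:ℝ),
        gaussDensity r (2 * x - z) (lam * r))
      = Real.exp (-(2 * lam * (x - z))) * (lam * ∫ r in Ioi (0:ℝ),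
        gaussDensity r (2 * x - z) (lam * r)) by ring,
    gauss_total lam (2 * x - z) hlam hy, mul_one]
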